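/- Let n ≥ 1 and let f : ℝⁿ → ℝ be a C² function with ‖∇f(x)‖ = 1 for all x ∈ ℝⁿ. Then for every x ∈ ℝⁿ and every c in the range of f, the distance from x to the level set f⁻¹(c) equals |f(x) − c|. In particular, any two nonempty level sets f⁻¹(s) and f⁻¹(t) are equidistant: the infimum of ‖p − q‖ over p ∈ f⁻¹(s), q ∈ f⁻¹(t) equals |s − t|, and every point of f⁻¹(s) is at distance exactly |s − t| from f⁻¹(t). -/

import Mathlib

set_option maxHeartbeats 1000000

open Set Metric InnerProductSpace
open scoped RealInnerProductSpace

theorem gronwall_zero_aux {F : Type*} [NormedAddCommGroup F] [NormedSpace ℝ F]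
    (ψ ψ' : ℝ → F) (B : ℝ → ℝ) (hB : Continuous B)
    (hd : ∀ t, HasDerivAt ψ (ψ' t) t)
    (hb : ∀ t, ‖ψ' t‖ ≤ B t * ‖ψ t‖) (h0 : ψ 0 = 0) {t : ℝ} (ht : 0 ≤ t) :
    ψ t = 0 := by
  obtain ⟨C, hC⟩ := (isCompact_Icc (a := (0:ℝ)) (b := t)).exists_bound_of_continuousOn
    hB.continuousOn
  have key := norm_le_gronwallBound_of_norm_deriv_right_le (f := ψ) (f' := ψ')
    (δ := 0) (K := C) (ε := 0) (a := 0) (b := t)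
    (fun s _ => (hd s).continuousAt.continuousWithinAt)
    (fun s _ => (hd s).hasDerivWithinAt)
    (by simp [h0])
    (fun s hs => by
      have h1 := hb s
      have h2 : B s ≤ C := (le_abs_self _).trans (by simpa using hC s ⟨hs.1, hs.2.le⟩)
      nlinarith [norm_nonneg (ψ s), norm_nonneg (ψ' s)])
  have h3 := key t ⟨ht, le_rfl⟩
  rw [sub_zero, gronwallBound_ε0_δ0] at h3
  exact norm_le_zero_iff.mp h3

theorem gronwall_zero {F : Type*} [NormedAddCommGroup F] [NormedSpace ℝ F]
    (ψ ψ' : ℝ → F) (B : ℝ → ℝ) (hB : Continuous B)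
    (hd : ∀ t, HasDerivAt ψ (ψ' t) t)
    (hb : ∀ t, ‖ψ' t‖ ≤ B t * ‖ψ t‖) (h0 : ψ 0 = 0) (t : ℝ) :
    ψ t = 0 := by
  rcases le_or_gt 0 t with ht | ht
  · exact gronwall_zero_aux ψ ψ' B hB hd hb h0 ht
  · have hd' : ∀ s : ℝ, HasDerivAt (fun s => ψ (-s)) (-ψ' (-s)) s := by
      intro s
      have := (hd (-s)).scomp s (hasDerivAt_neg s)
      simpa [Function.comp_def] using this
    have := gronwall_zero_aux (fun s => ψ (-s)) (fun s => -ψ' (-s)) (fun s => B (-s))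
      (hB.comp continuous_neg) hd'
      (fun s => by simpa using hb (-s)) (by simpa using h0) (t := -t) (by linarith)
    simpa using this

theorem eikonal_gradient_line {F : Type*} [NormedAddCommGroup F] [InnerProductSpace ℝ F]
    [CompleteSpace F] (f : F → ℝ) (hf : ContDiff ℝ 2 f)
    (heik : ∀ x, ‖gradient f x‖ = 1) (x : F) (t : ℝ) :
    f (x + t • gradient f x) = f x + t := by
  have hdiff : Differentiable ℝ f := hf.differentiable (by norm_num)
  have hf1 : ContDiff ℝ 1 (fderiv ℝ f) := hf.fderiv_right (by norm_num)
  have hfd1 : Differentiable ℝ (fderiv ℝ f) := hf1.differentiable one_ne_zero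
  set ℓ := (toDual ℝ F).symm with hℓ
  set G : F → F := fun y => gradient f y with hGdef
  have hGcomp : G = ⇑ℓ ∘ fderiv ℝ f := rfl
  have hGsmooth : ContDiff ℝ 1 G := by
    rw [hGcomp]; exact ℓ.contDiff.comp hf1
  set A : F → F →L[ℝ] F := fun y => fderiv ℝ G y with hAdef
  have hGA : ∀ y, HasFDerivAt G (A y) y := fun y =>
    ((hGsmooth.differentiable one_ne_zero) y).hasFDerivAt
  have hAcomp : ∀ y w, A y w = ℓ (fderiv ℝ (fderiv ℝ f) y w) := by
    intro y w
    have h := ((ℓ.comp_hasFDerivAt_iff (f := fderiv ℝ f) (x := y)).mpr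
      (hfd1 y).hasFDerivAt).fderiv
    rw [hAdef]
    simp only [hGcomp, h]
    simp
  -- inner product formula for the gradient
  have hfder : ∀ y u, fderiv ℝ f y u = ⟪G y, u⟫ := fun y u =>
    (toDual_symm_apply (𝕜 := ℝ) (E := F)).symm
  -- inner product formula for A
  have hAinner : ∀ y w u, ⟪A y w, u⟫ = fderiv ℝ (fderiv ℝ f) y w u := by
    intro y w u
    rw [hAcomp]
    exact toDual_symm_apply
  -- symmetry of second derivative
  have hsymm : ∀ y w u, ⟪A y w, u⟫ = ⟪A y u, w⟫ := by
    intro y w u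
    rw [hAinner, hAinner]
    exact (hf.contDiffAt.isSymmSndFDerivAt (by norm_num)) w u
  -- A y (G y) = 0
  have hAG : ∀ y, A y (G y) = 0 := by
    intro y
    have key : ∀ w, ⟪A y w, G y⟫ = 0 := by
      intro w
      have hline : HasDerivAt (fun s : ℝ => y + s • w) w 0 := by
        simpa using ((hasDerivAt_id (0:ℝ)).smul_const w).const_add y
      have hcurve : HasDerivAt (fun s : ℝ => G (y + s • w)) (A y w) 0 := by
        have := (hGA (y + (0:ℝ) • w)).comp_hasDerivAt 0 hline
        simpa [Function.comp_def] using this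
      have hconst : HasDerivAt (fun s : ℝ => ⟪G (y + s • w), G (y + s • w)⟫) 0 0 := by
        have : (fun s : ℝ => ⟪G (y + s • w), G (y + s • w)⟫) = fun _ => (1:ℝ) := by
          funext s
          rw [real_inner_self_eq_norm_sq, heik]
          norm_num
        rw [this]
        exact hasDerivAt_const 0 1
      have hder := hcurve.inner ℝ hcurve
      have h2 := hconst.unique hder
      simp only [zero_smul, add_zero] at h2
      rw [real_inner_comm] at h2
      linarith
    have h2 : ⟪A y (G y), A y (G y)⟫ = 0 := by rw [hsymm]; exact key _
    exact inner_self_eq_zero.mp h2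
  -- the gradient is constant along the line through x in direction v
  set v := G x with hv
  have hlineD : ∀ s : ℝ, HasDerivAt (fun r : ℝ => x + r • v) v s := by
    intro s
    simpa using ((hasDerivAt_id s).smul_const v).const_add x
  have hGline : ∀ s : ℝ, G (x + s • v) = v := by
    have hψ := gronwall_zero (fun s : ℝ => G (x + s • v) - v)
      (fun s : ℝ => A (x + s • v) v)
      (fun s : ℝ => ‖A (x + s • v)‖)
      (((hGsmooth.continuous_fderiv one_ne_zero).comp (continuous_const.add (continuous_id.smul continuous_const))).norm)
      (fun s => by have := (((hGA (x + s • v)).comp_hasDerivAt s (hlineD s))).sub_const v; exact this)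
      (fun s => by
        have hrw : A (x + s • v) v = - A (x + s • v) (G (x + s • v) - v) := by
          rw [map_sub, hAG, zero_sub, neg_neg]
        show ‖A (x + s • v) v‖ ≤ ‖A (x + s • v)‖ * ‖G (x + s • v) - v‖
        rw [hrw, norm_neg]
        exact (A (x + s • v)).le_opNorm _)
      (by simp [hv])
    intro s
    have := hψ s
    rwa [sub_eq_zero] at this
  -- f is affine along the line
  have hderivg : ∀ s : ℝ, HasDerivAt (fun r : ℝ => f (x + r • v) - r) 0 s := by
    intro s
    have h1 : HasDerivAt (fun r : ℝ => f (x + r • v)) (fderiv ℝ f (x + s • v) v) s :=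
      ((hdiff _).hasFDerivAt).comp_hasDerivAt s (hlineD s)
    have h2 : fderiv ℝ f (x + s • v) v = 1 := by
      rw [hfder, hGline, real_inner_self_eq_norm_sq, heik]
      norm_num
    rw [h2] at h1
    simpa [Pi.sub_def] using h1.sub (hasDerivAt_id s)
  have hconst := is_const_of_deriv_eq_zero (f := fun r : ℝ => f (x + r • v) - r)
    (fun s => (hderivg s).differentiableAt) (fun s => (hderivg s).deriv) t 0
  simp only [zero_smul, add_zero, sub_zero] at hconst
  have : f (x + t • v) - t = f x := by simpa using hconst
  linarith


/-- For a C² unit eikonal function `f : ℝⁿ → ℝ` (`‖∇f‖ ≡ 1`), the distance from any point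
`x` to a nonempty level set `f⁻¹(c)` equals `|f(x) − c|`; consequently any two nonempty
level sets `f⁻¹(s)` and `f⁻¹(t)` are equidistant: the infimum of the distances between
their points is `|s − t|`, and every point of `f⁻¹(s)` is at distance exactly `|s − t|`
from `f⁻¹(t)`. -/
theorem eikonal_level_sets_equidistant {n : ℕ} (hn : 1 ≤ n)
    (f : EuclideanSpace ℝ (Fin n) → ℝ) (hf : ContDiff ℝ 2 f)
    (heik : ∀ x : EuclideanSpace ℝ (Fin n), ‖gradient f x‖ = 1) :
    (∀ (x : EuclideanSpace ℝ (Fin n)), ∀ c ∈ Set.range f,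
      Metric.infDist x (f ⁻¹' {c}) = |f x - c|) ∧
    (∀ s ∈ Set.range f, ∀ t ∈ Set.range f,
      sInf {r : ℝ | ∃ p ∈ f ⁻¹' {s}, ∃ q ∈ f ⁻¹' {t}, r = ‖p - q‖} = |s - t| ∧
      ∀ p ∈ f ⁻¹' {s}, Metric.infDist p (f ⁻¹' {t}) = |s - t|) := by
  have hdiff : Differentiable ℝ f := hf.differentiable (by norm_num)
  -- f is 1-Lipschitz
  have hlip : LipschitzWith 1 f := by
    apply lipschitzWith_of_nnnorm_fderiv_le hdiff
    intro x
    have h1 : ‖fderiv ℝ f x‖ = 1 := by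
      have h2 : ‖gradient f x‖ = ‖fderiv ℝ f x‖ :=
        LinearIsometryEquiv.norm_map (toDual ℝ (EuclideanSpace ℝ (Fin n))).symm _
      rw [← h2, heik]
    rw [← norm_toNNReal, h1]
    norm_num
  have hdistf : ∀ p q : EuclideanSpace ℝ (Fin n), |f p - f q| ≤ ‖p - q‖ := by
    intro p q
    have := hlip.dist_le_mul p q
    rwa [Real.dist_eq, dist_eq_norm, NNReal.coe_one, one_mul] at this
  -- membership of the "flowed" point
  have hflow : ∀ (x : EuclideanSpace ℝ (Fin n)) (c : ℝ),
      f (x + (c - f x) • gradient f x) = c := by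
    intro x c
    rw [eikonal_gradient_line f hf heik]
    ring
  have hflowdist : ∀ (x : EuclideanSpace ℝ (Fin n)) (c : ℝ),
      dist x (x + (c - f x) • gradient f x) = |f x - c| := by
    intro x c
    rw [dist_self_add_right, norm_smul, heik, mul_one, Real.norm_eq_abs, abs_sub_comm]
  -- key claim
  have key : ∀ (x : EuclideanSpace ℝ (Fin n)) (c : ℝ),
      Metric.infDist x (f ⁻¹' {c}) = |f x - c| := by
    intro x c
    have hmem : x + (c - f x) • gradient f x ∈ f ⁻¹' {c} := hflow x c
    refine le_antisymm ?_ ?_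
    · calc Metric.infDist x (f ⁻¹' {c}) ≤ dist x (x + (c - f x) • gradient f x) :=
            Metric.infDist_le_dist_of_mem hmem
        _ = |f x - c| := hflowdist x c
    · rw [Metric.infDist_eq_iInf]
      have : Nonempty (f ⁻¹' {c}) := ⟨⟨_, hmem⟩⟩
      refine le_ciInf fun y => ?_
      have hy : f (y : EuclideanSpace ℝ (Fin n)) = c := y.2
      rw [dist_eq_norm]
      calc |f x - c| = |f x - f (y : EuclideanSpace ℝ (Fin n))| := by rw [hy]
        _ ≤ ‖x - (y : EuclideanSpace ℝ (Fin n))‖ := hdistf x _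
  refine ⟨fun x c _ => key x c, fun s hs t ht => ?_⟩
  obtain ⟨p₀, hp₀⟩ := hs
  constructor
  · set q₀ := p₀ + (t - f p₀) • gradient f p₀ with hq₀
    have hq₀mem : q₀ ∈ f ⁻¹' {t} := hflow p₀ t
    have hnorm : ‖p₀ - q₀‖ = |s - t| := by
      rw [hq₀]
      have : p₀ - (p₀ + (t - f p₀) • gradient f p₀) = -((t - f p₀) • gradient f p₀) := by
        abel
      rw [this, norm_neg, norm_smul, heik, mul_one, Real.norm_eq_abs, hp₀, abs_sub_comm]
    have hmem : |s - t| ∈ {r : ℝ | ∃ p ∈ f ⁻¹' {s}, ∃ q ∈ f ⁻¹' {t}, r = ‖p - q‖} :=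
      ⟨p₀, by simp [hp₀], q₀, hq₀mem, hnorm.symm⟩
    have hlb : ∀ r ∈ {r : ℝ | ∃ p ∈ f ⁻¹' {s}, ∃ q ∈ f ⁻¹' {t}, r = ‖p - q‖},
        |s - t| ≤ r := by
      rintro r ⟨p, hp, q, hq, rfl⟩
      have hps : f p = s := hp
      have hqt : f q = t := hq
      calc |s - t| = |f p - f q| := by rw [hps, hqt]
        _ ≤ ‖p - q‖ := hdistf p q
    exact le_antisymm (csInf_le ⟨|s - t|, hlb⟩ hmem) (le_csInf ⟨_, hmem⟩ hlb)
  · intro p hp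
    have hps : f p = s := hp
    rw [key p t, hps]
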